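/- Assume Y has at least two elements, Y° is nonempty, P(x,Y) := ∑_{w∈Y} P(x,w) > 0 for every x ∈ Y, the Y×Y stochastic matrix P_{[Y]}(x,y) = P(x,y)/P(x,Y) is irreducible, and the ∂Y×∂Y matrix I_{∂Y} + R_{[Y]} is invertible, where R_{[Y]} = (P_{[Y]})_{∂Y,Y°} G_{Y°}² (P_{[Y]})_{Y°,∂Y} with G_{Y°} = (I_{Y°} − P_{Y°})^{-1}. Then for every f ∈ L(Y°), g₁ ∈ L(∂Y) and g₂ ∈ L(∂X) there exists a unique u ∈ L(X) such that Δ_{[Y]}²(u_Y) = f on Y°, ∂*_n u = g₁ on ∂Y, and u = g₂ on ∂X, where Δ_{[Y]} = P_{[Y]} − I_Y and ∂*_n u(y) = (1/P(y,∂X)) ∑_{z∈∂X} P(y,z)(u(z) − u(y)) for y ∈ ∂Y. Its restriction u_Y is the unique solution of the bi-Laplace Dirichlet problem Δ_{[Y]}²(u_Y) = f on Y°, u_Y = g on ∂Y, where g(y) = (1/P(y,∂X)) ∑_{z∈∂X} P(y,z) g₂(z) − g₁(y). -/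

import Mathlib

open Matrix Finset

attribute [local instance] Classical.propDecidable

variable {X : Type*}

/-- The `A × A` submatrix of `P`. -/
def subMatrix (P : Matrix X X ℝ) (A : Finset X) : Matrix A A ℝ :=
  Matrix.of fun x y => P x.1 y.1

/-- The Green kernel `G_A = (I_A − P_A)⁻¹`. -/
noncomputable def green [DecidableEq X] (P : Matrix X X ℝ) (A : Finset X) :
    Matrix A A ℝ :=
  (1 - subMatrix P A)⁻¹

/-- The stochastic matrix `P_{[Y]}(x,y) = P(x,y)/P(x,Y)` of the sub-network
`Y = X°` (with `∂X = Bnd`). -/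
noncomputable def PY [Fintype X] [DecidableEq X] (P : Matrix X X ℝ) (Bnd : Finset X) :
    Matrix ↥Bndᶜ ↥Bndᶜ ℝ :=
  Matrix.of fun x y => P x.1 y.1 / ∑ w ∈ Bndᶜ, P x.1 w

/-- The Laplacian `Δ_{[Y]} = P_{[Y]} − I_Y` acting on complex functions on `Y`. -/
noncomputable def lapY [Fintype X] [DecidableEq X] (P : Matrix X X ℝ) (Bnd : Finset X)
    (w : ↥Bndᶜ → ℂ) (x : ↥Bndᶜ) : ℂ :=
  (∑ z, (PY P Bnd x z : ℂ) * w z) - w x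

/-- The boundary `∂Y = {y ∈ Y : P(y,z) > 0 for some z ∈ ∂X}` of `Y = X°`. -/
noncomputable def bY [Fintype X] [DecidableEq X] (P : Matrix X X ℝ) (Bnd : Finset X) :
    Finset X :=
  Bndᶜ.filter fun y => ∃ z ∈ Bnd, 0 < P y z

/-- The second interior `Y° = Y ∖ ∂Y`. -/
noncomputable def Yint [Fintype X] [DecidableEq X] (P : Matrix X X ℝ) (Bnd : Finset X) :
    Finset X :=
  Bndᶜ \ bY P Bnd

/-- The matrix `R_{[Y]} = (P_{[Y]})_{∂Y,Y°} G_{Y°}² (P_{[Y]})_{Y°,∂Y}`. -/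
noncomputable def RY [Fintype X] [DecidableEq X] (P : Matrix X X ℝ) (Bnd : Finset X) :
    Matrix ↥(bY P Bnd) ↥(bY P Bnd) ℝ :=
  (Matrix.of fun (x : ↥(bY P Bnd)) (y : ↥(Yint P Bnd)) =>
      P x.1 y.1 / ∑ w ∈ Bndᶜ, P x.1 w) *
    (green P (Yint P Bnd)) ^ 2 *
    (Matrix.of fun (y : ↥(Yint P Bnd)) (z : ↥(bY P Bnd)) =>
      P y.1 z.1 / ∑ w ∈ Bndᶜ, P y.1 w)

/-- `u` solves the plate problem (variant 2): `Δ_{[Y]}²(u_Y) = f` on `Y°`,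
`∂*ₙu = g₁` on `∂Y`, `u = g₂` on `∂X`. -/
noncomputable def PlateSolves [Fintype X] [DecidableEq X] (P : Matrix X X ℝ)
    (Bnd : Finset X) (f g₁ g₂ : X → ℂ) (u : X → ℂ) : Prop :=
  (∀ y : ↥(Yint P Bnd),
      lapY P Bnd (lapY P Bnd fun z : ↥Bndᶜ => u z.1)
        ⟨y.1, (Finset.mem_sdiff.mp y.2).1⟩ = f y.1) ∧
  (∀ y ∈ bY P Bnd,
      ((∑ z ∈ Bnd, P y z : ℝ) : ℂ)⁻¹ * ∑ z ∈ Bnd, (P y z : ℂ) * (u z - u y) = g₁ y) ∧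
  (∀ x ∈ Bnd, u x = g₂ x)

/-- `w : Y → ℂ` solves the bi-Laplace Dirichlet problem on the sub-network `Y`:
`Δ_{[Y]}²w = f` on `Y°` and `w = g` on `∂Y`. -/
noncomputable def BiDirSolves [Fintype X] [DecidableEq X] (P : Matrix X X ℝ)
    (Bnd : Finset X) (f : X → ℂ) (g : X → ℂ) (w : ↥Bndᶜ → ℂ) : Prop :=
  (∀ y : ↥(Yint P Bnd),
      lapY P Bnd (lapY P Bnd w) ⟨y.1, (Finset.mem_sdiff.mp y.2).1⟩ = f y.1) ∧
  (∀ y : ↥Bndᶜ, y.1 ∈ bY P Bnd → w y = g y.1)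

section PlateAux

variable [Fintype X] [DecidableEq X]

private theorem Yint_subset (P : Matrix X X ℝ) (Bnd : Finset X) :
    Yint P Bnd ⊆ Bndᶜ := Finset.sdiff_subset

private theorem bY_subset (P : Matrix X X ℝ) (Bnd : Finset X) :
    bY P Bnd ⊆ Bndᶜ := Finset.filter_subset _ _

private theorem not_mem_bY {P : Matrix X X ℝ} {Bnd : Finset X} {x : X}
    (hx : x ∈ Yint P Bnd) : x ∉ bY P Bnd := (Finset.mem_sdiff.mp hx).2

private theorem not_mem_Yint {P : Matrix X X ℝ} {Bnd : Finset X} {x : X}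
    (hx : x ∈ bY P Bnd) : x ∉ Yint P Bnd := fun h => (Finset.mem_sdiff.mp h).2 hx

private theorem mem_Yint_of {P : Matrix X X ℝ} {Bnd : Finset X} {x : X}
    (h1 : x ∈ Bndᶜ) (h2 : x ∉ bY P Bnd) : x ∈ Yint P Bnd := Finset.mem_sdiff.mpr ⟨h1, h2⟩

/-- splitting a sum over `Y` into the second interior and the boundary of `Y`. -/
private theorem sum_Y_split {M : Type*} [AddCommMonoid M] (P : Matrix X X ℝ) (Bnd : Finset X)
    (F : X → M) :
    ∑ z : ↥Bndᶜ, F z.1 = (∑ z : ↥(Yint P Bnd), F z.1) + ∑ z : ↥(bY P Bnd), F z.1 := by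
  rw [Finset.sum_coe_sort, Finset.sum_coe_sort, Finset.sum_coe_sort]
  exact (Finset.sum_sdiff (bY_subset P Bnd)).symm

private theorem sum_Y_split' {M : Type*} [AddCommMonoid M] (P : Matrix X X ℝ) (Bnd : Finset X)
    (G : ↥Bndᶜ → M) :
    ∑ z : ↥Bndᶜ, G z =
      (∑ z : ↥(Yint P Bnd), G ⟨z.1, Yint_subset P Bnd z.2⟩) +
        ∑ z : ↥(bY P Bnd), G ⟨z.1, bY_subset P Bnd z.2⟩ := by
  classical
  have h := sum_Y_split P Bnd (fun v => if h : v ∈ Bndᶜ then G ⟨v, h⟩ else 0)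
  calc ∑ z : ↥Bndᶜ, G z = ∑ z : ↥Bndᶜ, (if h : z.1 ∈ Bndᶜ then G ⟨z.1, h⟩ else 0) :=
        Finset.sum_congr rfl fun z _ => by rw [dif_pos z.2]
    _ = _ := h
    _ = _ := by
        congr 1
        · exact Finset.sum_congr rfl fun z _ => by rw [dif_pos (Yint_subset P Bnd z.2)]
        · exact Finset.sum_congr rfl fun z _ => by rw [dif_pos (bY_subset P Bnd z.2)]

private theorem P_zero_on_Bnd {P : Matrix X X ℝ} {Bnd : Finset X}
    (hnonneg : ∀ x y, 0 ≤ P x y) {y : X} (hy : y ∈ Yint P Bnd)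
    {z : X} (hz : z ∈ Bnd) : P y z = 0 := by
  by_contra h
  exact (Finset.mem_sdiff.mp hy).2 (Finset.mem_filter.mpr
    ⟨(Finset.mem_sdiff.mp hy).1, z, hz, lt_of_le_of_ne (hnonneg y z) (Ne.symm h)⟩)

private theorem s_eq_one {P : Matrix X X ℝ} {Bnd : Finset X}
    (hnonneg : ∀ x y, 0 ≤ P x y) (hrow : ∀ x, ∑ y, P x y = 1)
    {y : X} (hy : y ∈ Yint P Bnd) : ∑ w ∈ Bndᶜ, P y w = 1 := by
  have h0 : ∑ z ∈ Bnd, P y z = 0 :=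
    Finset.sum_eq_zero fun z hz => P_zero_on_Bnd hnonneg hy hz
  have h := Finset.sum_add_sum_compl Bnd (P y)
  rw [h0, zero_add] at h
  rw [h, hrow]

private theorem sB_pos {P : Matrix X X ℝ} {Bnd : Finset X}
    (hnonneg : ∀ x y, 0 ≤ P x y) {y : X} (hy : y ∈ bY P Bnd) :
    0 < ∑ z ∈ Bnd, P y z := by
  obtain ⟨-, z, hz, hp⟩ := Finset.mem_filter.mp hy
  exact Finset.sum_pos' (fun i _ => hnonneg y i) ⟨z, hz, hp⟩

private theorem pow_entry_nonneg {ι : Type*} [Fintype ι] [DecidableEq ι]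
    (M : Matrix ι ι ℝ) (h : ∀ i j, 0 ≤ M i j) (n : ℕ) :
    ∀ i j, 0 ≤ (M ^ n) i j := by
  induction n with
  | zero =>
    intro i j
    rw [pow_zero, Matrix.one_apply]
    split <;> norm_num
  | succ n ih =>
    intro i j
    rw [pow_succ, Matrix.mul_apply]
    exact Finset.sum_nonneg fun k _ => mul_nonneg (ih i k) (h k j)

private theorem PY_nonneg {P : Matrix X X ℝ} {Bnd : Finset X}
    (hnonneg : ∀ x y, 0 ≤ P x y)
    (hpos : ∀ x ∈ Bndᶜ, 0 < ∑ w ∈ Bndᶜ, P x w) (x y : ↥Bndᶜ) :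
    0 ≤ PY P Bnd x y :=
  div_nonneg (hnonneg _ _) (le_of_lt (hpos _ x.2))

private theorem pos_factors {a b : ℝ} (ha : 0 ≤ a) (hb : 0 ≤ b) (h : 0 < a * b) :
    0 < a ∧ 0 < b := by
  constructor
  · rcases ha.lt_or_eq with h' | h'
    · exact h'
    · exfalso; rw [← h', zero_mul] at h; exact lt_irrefl 0 h
  · rcases hb.lt_or_eq with h' | h'
    · exact h'
    · exfalso; rw [← h', mul_zero] at h; exact lt_irrefl 0 h

private theorem exists_pos_term {ι : Type*} [Fintype ι] {F : ι → ℝ}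
    (h : 0 < ∑ i, F i) : ∃ i, 0 < F i := by
  by_contra hc
  push_neg at hc
  exact absurd (Finset.sum_nonpos fun i _ => hc i) (not_le.mpr h)

private theorem bY_nonempty (P : Matrix X X ℝ) (Bnd : Finset X)
    (hnonneg : ∀ x y, 0 ≤ P x y)
    (hirr : ∀ x y, ∃ n, 1 ≤ n ∧ 0 < (P ^ n) x y)
    (hB : Bnd.Nonempty) (hB' : Bnd ≠ Finset.univ) :
    (bY P Bnd).Nonempty := by
  have key : ∀ n : ℕ, ∀ a, a ∉ Bnd → ∀ b ∈ Bnd, 0 < (P ^ (n + 1)) a b →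
      (bY P Bnd).Nonempty := by
    intro n
    induction n with
    | zero =>
      intro a ha b hb h
      rw [pow_one] at h
      exact ⟨a, Finset.mem_filter.mpr ⟨Finset.mem_compl.mpr ha, b, hb, h⟩⟩
    | succ n ih =>
      intro a ha b hb h
      rw [pow_succ', Matrix.mul_apply] at h
      obtain ⟨z, hz⟩ := exists_pos_term h
      obtain ⟨h1, h2⟩ := pos_factors (hnonneg a z)
        (pow_entry_nonneg P hnonneg (n + 1) z b) hz
      by_cases hzB : z ∈ Bnd
      · exact ⟨a, Finset.mem_filter.mpr ⟨Finset.mem_compl.mpr ha, z, hzB, h1⟩⟩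
      · exact ih z hzB b hb h2
  obtain ⟨b, hb⟩ := hB
  obtain ⟨a, ha⟩ : ∃ a, a ∉ Bnd := by
    by_contra hc
    push_neg at hc
    exact hB' (Finset.eq_univ_iff_forall.mpr hc)
  obtain ⟨n, hn1, hn⟩ := hirr a b
  obtain ⟨m, rfl⟩ := Nat.exists_eq_add_of_le hn1
  exact key m a ha b hb (by rwa [add_comm] at hn)

end PlateAux
section PlateAux2

variable [Fintype X] [DecidableEq X]

private theorem kernel_lemma (P : Matrix X X ℝ) (Bnd : Finset X)
    (hnonneg : ∀ x y, 0 ≤ P x y) (hrow : ∀ x, ∑ y, P x y = 1)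
    (hpos : ∀ x ∈ Bndᶜ, 0 < ∑ w ∈ Bndᶜ, P x w)
    (hirrY : ∀ x y : ↥Bndᶜ, ∃ n, 1 ≤ n ∧ 0 < ((PY P Bnd) ^ n) x y)
    (hYo : (Yint P Bnd).Nonempty) (hbY : (bY P Bnd).Nonempty)
    (v : ↥(Yint P Bnd) → ℝ)
    (hv : (subMatrix P (Yint P Bnd)) *ᵥ v = v) : v = 0 := by
  have : Nonempty ↥(Yint P Bnd) := ⟨⟨hYo.choose, hYo.choose_spec⟩⟩
  -- main claim : any vector fixed by the submatrix has nonpositive maximum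
  have main : ∀ u : ↥(Yint P Bnd) → ℝ, (subMatrix P (Yint P Bnd)) *ᵥ u = u →
      ∀ i₀ : ↥(Yint P Bnd), (∀ j, u j ≤ u i₀) → u i₀ ≤ 0 := by
    intro u hu i₀ hm
    by_contra hcon
    push_neg at hcon
    -- one-step propagation of the maximum
    have step : ∀ z : ↥(Yint P Bnd), u z = u i₀ →
        ∀ w : ↥Bndᶜ, 0 < PY P Bnd ⟨z.1, Yint_subset P Bnd z.2⟩ w →
          ∃ hw : w.1 ∈ Yint P Bnd, u ⟨w.1, hw⟩ = u i₀ := by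
      intro z hz w hw
      have hs1 : ∑ w' ∈ Bndᶜ, P z.1 w' = 1 := s_eq_one hnonneg hrow z.2
      have hAv : ∑ j : ↥(Yint P Bnd), P z.1 j.1 * u j = u i₀ := by
        have := congrFun hu z
        rw [← hz]
        simpa [Matrix.mulVec, dotProduct, subMatrix] using this
      have ht1 : ∑ j : ↥(Yint P Bnd), P z.1 j.1 ≤ 1 := by
        rw [Finset.sum_coe_sort, ← hs1]
        exact Finset.sum_le_sum_of_subset_of_nonneg (Yint_subset P Bnd)
          (fun i _ _ => hnonneg z.1 i)
      have hb1 : ∑ j : ↥(Yint P Bnd), P z.1 j.1 * u j ≤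
          (∑ j : ↥(Yint P Bnd), P z.1 j.1) * u i₀ := by
        rw [Finset.sum_mul]
        exact Finset.sum_le_sum fun j _ =>
          mul_le_mul_of_nonneg_left (hm j) (hnonneg z.1 j.1)
      have ht : (∑ j : ↥(Yint P Bnd), P z.1 j.1) = 1 := by
        have h1 : u i₀ ≤ (∑ j : ↥(Yint P Bnd), P z.1 j.1) * u i₀ := hAv ▸ hb1
        have h2 : (∑ j : ↥(Yint P Bnd), P z.1 j.1) * u i₀ ≤ 1 * u i₀ :=
          mul_le_mul_of_nonneg_right ht1 hcon.le
        rw [one_mul] at h2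
        have := le_antisymm h2 h1
        exact mul_right_cancel₀ (ne_of_gt hcon) (by rw [this, one_mul])
      have hzero : ∀ j : ↥(Yint P Bnd), P z.1 j.1 * (u i₀ - u j) = 0 := by
        have hsum0 : ∑ j : ↥(Yint P Bnd), P z.1 j.1 * (u i₀ - u j) = 0 := by
          simp only [mul_sub]
          rw [Finset.sum_sub_distrib, hAv, ← Finset.sum_mul, ht, one_mul, sub_self]
        have := (Finset.sum_eq_zero_iff_of_nonneg
          (fun j _ => mul_nonneg (hnonneg z.1 j.1) (sub_nonneg.mpr (hm j)))).mp hsum0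
        exact fun j => this j (Finset.mem_univ j)
      have hbzero : ∀ w' ∈ bY P Bnd, P z.1 w' = 0 := by
        have hsplit : (∑ w' ∈ Yint P Bnd, P z.1 w') + ∑ w' ∈ bY P Bnd, P z.1 w' = 1 := by
          rw [← hs1]
          exact Finset.sum_sdiff (bY_subset P Bnd)
        have ht' : ∑ w' ∈ Yint P Bnd, P z.1 w' = 1 := by
          rw [← ht, Finset.sum_coe_sort]
        have : ∑ w' ∈ bY P Bnd, P z.1 w' = 0 := by linarith
        exact fun w' hw' => (Finset.sum_eq_zero_iff_of_nonneg
          (fun i _ => hnonneg z.1 i)).mp this w' hw'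
      have hPzw : 0 < P z.1 w.1 := by
        have : PY P Bnd ⟨z.1, Yint_subset P Bnd z.2⟩ w = P z.1 w.1 := by
          simp [PY, hs1]
        rwa [this] at hw
      have hwY : w.1 ∈ Yint P Bnd := by
        by_contra hc
        have : w.1 ∈ bY P Bnd := by
          rcases Finset.mem_sdiff.mp (w.2 : w.1 ∈ Bndᶜ) with _
          · by_contra hc2
            exact hc (mem_Yint_of w.2 hc2)
        exact absurd (hbzero w.1 this) (ne_of_gt hPzw)
      refine ⟨hwY, ?_⟩
      have := hzero ⟨w.1, hwY⟩
      rcases mul_eq_zero.mp this with h' | h'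
      · exact absurd h' (ne_of_gt hPzw)
      · linarith [sub_eq_zero.mp h']
    -- iterate the one-step propagation
    have claim : ∀ n : ℕ, ∀ w : ↥Bndᶜ,
        0 < ((PY P Bnd) ^ n) ⟨i₀.1, Yint_subset P Bnd i₀.2⟩ w →
          ∃ hw : w.1 ∈ Yint P Bnd, u ⟨w.1, hw⟩ = u i₀ := by
      intro n
      induction n with
      | zero =>
        intro w hw
        rw [pow_zero, Matrix.one_apply] at hw
        split at hw
        · next h =>
          subst h
          exact ⟨i₀.2, rfl⟩
        · exact absurd hw (lt_irrefl 0)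
      | succ n ih =>
        intro w hw
        rw [pow_succ, Matrix.mul_apply] at hw
        obtain ⟨z, hz⟩ := exists_pos_term hw
        obtain ⟨h1, h2⟩ := pos_factors
          (pow_entry_nonneg _ (PY_nonneg hnonneg hpos) n _ z)
          (PY_nonneg hnonneg hpos z w) hz
        obtain ⟨hzY, hzu⟩ := ih z h1
        have hzeq : (⟨(⟨z.1, hzY⟩ : ↥(Yint P Bnd)).1, Yint_subset P Bnd hzY⟩ : ↥Bndᶜ) = z :=
          Subtype.ext rfl
        exact step ⟨z.1, hzY⟩ hzu w (by rwa [hzeq])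
    obtain ⟨b, hb⟩ := hbY
    obtain ⟨n, -, hn⟩ := hirrY ⟨i₀.1, Yint_subset P Bnd i₀.2⟩ ⟨b, bY_subset P Bnd hb⟩
    obtain ⟨hw, -⟩ := claim n _ hn
    exact (Finset.mem_sdiff.mp hw).2 hb
  obtain ⟨i₀, -, hi₀⟩ := Finset.exists_max_image Finset.univ v Finset.univ_nonempty
  obtain ⟨i₁, -, hi₁⟩ := Finset.exists_max_image Finset.univ (-v) Finset.univ_nonempty
  have h₀ : v i₀ ≤ 0 := main v hv i₀ fun j => hi₀ j (Finset.mem_univ j)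
  have h₁ : (-v) i₁ ≤ 0 := by
    refine main (-v) ?_ i₁ fun j => hi₁ j (Finset.mem_univ j)
    rw [Matrix.mulVec_neg, hv]
  funext j
  have := hi₀ j (Finset.mem_univ j)
  have := hi₁ j (Finset.mem_univ j)
  simp only [Pi.neg_apply, Pi.zero_apply] at *
  linarith

end PlateAux2
section PlateAux3

variable [Fintype X] [DecidableEq X]

/-- The block `(P_{[Y]})_{Y°,∂Y}` (with denominators equal to `1`). -/
private noncomputable def Bm (P : Matrix X X ℝ) (Bnd : Finset X) :
    Matrix ↥(Yint P Bnd) ↥(bY P Bnd) ℝ :=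
  Matrix.of fun y z => P y.1 z.1

/-- The block `(P_{[Y]})_{∂Y,Y°}`. -/
private noncomputable def Cm (P : Matrix X X ℝ) (Bnd : Finset X) :
    Matrix ↥(bY P Bnd) ↥(Yint P Bnd) ℝ :=
  Matrix.of fun z y => P z.1 y.1 / ∑ w ∈ Bndᶜ, P z.1 w

/-- The matrix of the interior system. -/
private noncomputable def Mm (P : Matrix X X ℝ) (Bnd : Finset X) :
    Matrix ↥(Yint P Bnd) ↥(Yint P Bnd) ℝ :=
  (1 - subMatrix P (Yint P Bnd)) ^ 2 + Bm P Bnd * Cm P Bnd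

private theorem entry_id (P : Matrix X X ℝ) (Bnd : Finset X)
    (hnonneg : ∀ x y, 0 ≤ P x y) (hrow : ∀ x, ∑ y, P x y = 1)
    (y j : ↥(Yint P Bnd)) :
    (((PY P Bnd - 1) ^ 2 : Matrix ↥Bndᶜ ↥Bndᶜ ℝ)) ⟨y.1, Yint_subset P Bnd y.2⟩ ⟨j.1, Yint_subset P Bnd j.2⟩
      = Mm P Bnd y j := by
  have hsy : ∑ w ∈ Bndᶜ, P y.1 w = 1 := s_eq_one hnonneg hrow y.2
  rw [sq, Matrix.mul_apply]
  rw [sum_Y_split' P Bnd]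
  rw [Mm, Matrix.add_apply, sq, Matrix.mul_apply]
  congr 1
  · -- interior part
    apply Finset.sum_congr rfl
    intro k _
    have hsk : ∑ w ∈ Bndᶜ, P k.1 w = 1 := s_eq_one hnonneg hrow k.2
    simp only [Matrix.sub_apply, Matrix.one_apply, PY, Matrix.of_apply, hsy, hsk,
      subMatrix, div_one]
    have e1 : ((⟨y.1, Yint_subset P Bnd y.2⟩ : ↥Bndᶜ) = ⟨k.1, Yint_subset P Bnd k.2⟩)
        ↔ (y = k) := ⟨fun h => Subtype.ext (Subtype.mk.inj h), fun h => by subst h; rfl⟩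
    have e2 : ((⟨k.1, Yint_subset P Bnd k.2⟩ : ↥Bndᶜ) = ⟨j.1, Yint_subset P Bnd j.2⟩)
        ↔ (k = j) := ⟨fun h => Subtype.ext (Subtype.mk.inj h), fun h => by subst h; rfl⟩
    rw [if_congr e1 rfl rfl, if_congr e2 rfl rfl]
    ring
  · -- boundary part
    apply Finset.sum_congr rfl
    intro b _
    have hyb : (⟨y.1, Yint_subset P Bnd y.2⟩ : ↥Bndᶜ) ≠ ⟨b.1, bY_subset P Bnd b.2⟩ := by
      intro h
      rw [Subtype.mk.injEq] at h
      exact not_mem_bY y.2 (h ▸ b.2)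
    have hbj : (⟨b.1, bY_subset P Bnd b.2⟩ : ↥Bndᶜ) ≠ ⟨j.1, Yint_subset P Bnd j.2⟩ := by
      intro h
      rw [Subtype.mk.injEq] at h
      exact not_mem_bY j.2 (h ▸ b.2)
    simp only [Matrix.sub_apply, Matrix.one_apply, PY, Matrix.of_apply, hsy, div_one,
      if_neg hyb, if_neg hbj, sub_zero, Bm, Cm, Matrix.mul_apply]

private theorem lapY_eq (P : Matrix X X ℝ) (Bnd : Finset X) (w : ↥Bndᶜ → ℂ) :
    lapY P Bnd w = ((PY P Bnd).map (fun r => (r : ℂ)) - 1) *ᵥ w := by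
  funext x
  simp [lapY, Matrix.mulVec, dotProduct, Matrix.sub_apply, Matrix.map_apply,
    Matrix.one_apply, sub_mul, ite_mul, Finset.sum_sub_distrib, Finset.sum_ite_eq]

private theorem lap_lap (P : Matrix X X ℝ) (Bnd : Finset X) (w : ↥Bndᶜ → ℂ) (y : ↥Bndᶜ) :
    lapY P Bnd (lapY P Bnd w) y = ((((PY P Bnd - 1) ^ 2).map (fun r => (r : ℂ))) *ᵥ w) y := by
  rw [lapY_eq, lapY_eq, Matrix.mulVec_mulVec]
  congr 2
  ext i k
  simp only [sq, Matrix.mul_apply, Matrix.sub_apply, Matrix.one_apply, Matrix.map_apply]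
  push_cast [apply_ite (fun r : ℝ => (r : ℂ))]
  rfl

end PlateAux3
section PlateAux4

variable [Fintype X] [DecidableEq X]

private theorem lap_lap_ext (P : Matrix X X ℝ) (Bnd : Finset X)
    (hnonneg : ∀ x y, 0 ≤ P x y) (hrow : ∀ x, ∑ y, P x y = 1)
    (x : ↥(Yint P Bnd) → ℂ) (y : ↥(Yint P Bnd)) :
    lapY P Bnd (lapY P Bnd (fun z : ↥Bndᶜ =>
        if h : z.1 ∈ Yint P Bnd then x ⟨z.1, h⟩ else 0)) ⟨y.1, Yint_subset P Bnd y.2⟩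
      = ∑ j : ↥(Yint P Bnd), ((Mm P Bnd y j : ℝ) : ℂ) * x j := by
  rw [lap_lap]
  simp only [Matrix.mulVec, dotProduct]
  rw [sum_Y_split' P Bnd]
  have hβ : ∑ z : ↥(bY P Bnd), (((PY P Bnd - 1) ^ 2).map (fun r => (r : ℂ)))
      ⟨y.1, Yint_subset P Bnd y.2⟩ ⟨z.1, bY_subset P Bnd z.2⟩ *
      (if h : z.1 ∈ Yint P Bnd then x ⟨z.1, h⟩ else 0) = 0 := by
    apply Finset.sum_eq_zero
    intro z _
    rw [dif_neg (not_mem_Yint z.2), mul_zero]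
  rw [hβ, add_zero]
  apply Finset.sum_congr rfl
  intro j _
  rw [dif_pos j.2, Matrix.map_apply, entry_id P Bnd hnonneg hrow y j]

end PlateAux4
/-- Discrete plate equation, variant 2: with the second interior and
the modified outer normal derivative `∂*ₙ`, the problem `Δ_{[Y]}²(u_Y) = f` on `Y°`,
`∂*ₙu = g₁` on `∂Y`, `u = g₂` on `∂X` has a unique solution; its restriction to `Y`
is the unique solution of the bi-Laplace Dirichlet problem on `Y` with boundary data
`g(y) = (1/P(y,∂X)) ∑_{z∈∂X} P(y,z)g₂(z) − g₁(y)`. -/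
theorem plate_equation_variant2 [Fintype X] [DecidableEq X]
    (P : Matrix X X ℝ)
    (hcard : 1 < Fintype.card X)
    (hnonneg : ∀ x y, 0 ≤ P x y)
    (hrow : ∀ x, ∑ y, P x y = 1)
    (hirr : ∀ x y, ∃ n, 1 ≤ n ∧ 0 < (P ^ n) x y)
    (Bnd : Finset X) (hB : Bnd.Nonempty) (hB' : Bnd ≠ Finset.univ)
    (hcardY : 1 < Bndᶜ.card)
    (hYo : (Yint P Bnd).Nonempty)
    (hpos : ∀ x ∈ Bndᶜ, 0 < ∑ w ∈ Bndᶜ, P x w)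
    (hirrY : ∀ x y : ↥Bndᶜ, ∃ n, 1 ≤ n ∧ 0 < ((PY P Bnd) ^ n) x y)
    (hR : IsUnit (1 + RY P Bnd))
    (f g₁ g₂ : X → ℂ) :
    (∃! u : X → ℂ, PlateSolves P Bnd f g₁ g₂ u) ∧
    (∀ u : X → ℂ, PlateSolves P Bnd f g₁ g₂ u →
      (∀ y ∈ bY P Bnd,
        u y = ((∑ z ∈ Bnd, P y z : ℝ) : ℂ)⁻¹ * (∑ z ∈ Bnd, (P y z : ℂ) * g₂ z) - g₁ y) ∧
      (∀ w : ↥Bndᶜ → ℂ,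
        BiDirSolves P Bnd f
          (fun y => ((∑ z ∈ Bnd, P y z : ℝ) : ℂ)⁻¹ *
            (∑ z ∈ Bnd, (P y z : ℂ) * g₂ z) - g₁ y) w →
        w = fun y : ↥Bndᶜ => u y.1)) := by

  classical
  have hbYne : (bY P Bnd).Nonempty := bY_nonempty P Bnd hnonneg hirr hB hB'
  -- invertibility of `1 - P_{Y°}`
  have hker : ∀ v : ↥(Yint P Bnd) → ℝ, (1 - subMatrix P (Yint P Bnd)) *ᵥ v = 0 → v = 0 := by
    intro v hv
    apply kernel_lemma P Bnd hnonneg hrow hpos hirrY hYo hbYne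
    rw [Matrix.sub_mulVec, Matrix.one_mulVec] at hv
    exact (sub_eq_zero.mp hv).symm
  have hAunit : IsUnit (1 - subMatrix P (Yint P Bnd)) := by
    rw [← Matrix.mulVec_injective_iff_isUnit]
    intro a b hab
    have h0 : (1 - subMatrix P (Yint P Bnd)) *ᵥ (a - b) = 0 := by
      rw [Matrix.mulVec_sub, hab, sub_self]
    exact sub_eq_zero.mp (hker _ h0)
  have hdetA : IsUnit (1 - subMatrix P (Yint P Bnd)).det :=
    (Matrix.isUnit_iff_isUnit_det _).mp hAunit
  have hG1 : (1 - subMatrix P (Yint P Bnd)) * green P (Yint P Bnd) = 1 :=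
    Matrix.mul_nonsing_inv _ hdetA
  -- `RY` in block form
  have hRY : RY P Bnd = Cm P Bnd * green P (Yint P Bnd) ^ 2 * Bm P Bnd := by
    have h3 : (Matrix.of fun (y : ↥(Yint P Bnd)) (z : ↥(bY P Bnd)) =>
        P y.1 z.1 / ∑ w ∈ Bndᶜ, P y.1 w) = Bm P Bnd := by
      ext y z
      simp [Bm, s_eq_one hnonneg hrow y.2]
    rw [RY, h3]
    rfl
  -- factorization of `Mm`
  have hMfact : Mm P Bnd = (1 - subMatrix P (Yint P Bnd)) ^ 2 *
      (1 + green P (Yint P Bnd) ^ 2 * (Bm P Bnd * Cm P Bnd)) := by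
    rw [mul_add, mul_one, Mm]
    congr 1
    simp only [pow_two, ← Matrix.mul_assoc]
    rw [Matrix.mul_assoc (1 - subMatrix P (Yint P Bnd)) (1 - subMatrix P (Yint P Bnd))
      (green P (Yint P Bnd)), hG1, Matrix.mul_one, hG1, Matrix.one_mul]
  have hMdetUnit : IsUnit (Mm P Bnd).det := by
    rw [hMfact, Matrix.det_mul]
    apply IsUnit.mul
    · rw [Matrix.det_pow]
      exact hdetA.pow 2
    · have e1 : (1 : Matrix ↥(Yint P Bnd) ↥(Yint P Bnd) ℝ) +
          green P (Yint P Bnd) ^ 2 * (Bm P Bnd * Cm P Bnd) =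
          1 + (green P (Yint P Bnd) ^ 2 * Bm P Bnd) * Cm P Bnd := by
        rw [Matrix.mul_assoc]
      rw [e1, Matrix.det_one_add_mul_comm]
      have e2 : (1 : Matrix ↥(bY P Bnd) ↥(bY P Bnd) ℝ) +
          Cm P Bnd * (green P (Yint P Bnd) ^ 2 * Bm P Bnd) = 1 + RY P Bnd := by
        rw [hRY, Matrix.mul_assoc]
      rw [e2]
      exact (Matrix.isUnit_iff_isUnit_det _).mp hR
  -- the complex interior system matrix
  set Mc : Matrix ↥(Yint P Bnd) ↥(Yint P Bnd) ℂ :=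
    (Mm P Bnd).map (fun r => (r : ℂ)) with hMcdef
  have hMcdet : IsUnit Mc.det := by
    show IsUnit ((Complex.ofRealHom).mapMatrix (Mm P Bnd)).det
    rw [← RingHom.map_det]
    exact hMdetUnit.map Complex.ofRealHom
  have hMc1 : Mc * Mc⁻¹ = 1 := Matrix.mul_nonsing_inv _ hMcdet
  have hMc2 : Mc⁻¹ * Mc = 1 := Matrix.nonsing_inv_mul _ hMcdet
  have solve : ∀ b : ↥(Yint P Bnd) → ℂ, ∃! x, Mc *ᵥ x = b := by
    intro b
    refine ⟨Mc⁻¹ *ᵥ b, ?_, ?_⟩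
    · show Mc *ᵥ (Mc⁻¹ *ᵥ b) = b
      rw [Matrix.mulVec_mulVec, hMc1, Matrix.one_mulVec]
    · intro x hx
      rw [← hx, Matrix.mulVec_mulVec, hMc2, Matrix.one_mulVec]
  -- the boundary data
  set g : X → ℂ := fun y => ((∑ z ∈ Bnd, P y z : ℝ) : ℂ)⁻¹ *
      (∑ z ∈ Bnd, (P y z : ℂ) * g₂ z) - g₁ y with hgdef
  set κ : ↥Bndᶜ → ℂ := fun z => if z.1 ∈ Yint P Bnd then 0 else g z.1 with hκdef
  set cE : ↥(Yint P Bnd) → ℂ := fun y =>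
      lapY P Bnd (lapY P Bnd κ) ⟨y.1, Yint_subset P Bnd y.2⟩ with hcEdef
  set rhs : ↥(Yint P Bnd) → ℂ := fun y => f y.1 - cE y with hrhsdef
  have lin : ∀ (a b : ↥Bndᶜ → ℂ) (z : ↥Bndᶜ),
      lapY P Bnd (lapY P Bnd (a + b)) z
        = lapY P Bnd (lapY P Bnd a) z + lapY P Bnd (lapY P Bnd b) z := by
    intro a b z
    rw [lap_lap, lap_lap, lap_lap, Matrix.mulVec_add, Pi.add_apply]
  -- characterization of the bi-Laplace Dirichlet problem
  have char : ∀ w : ↥Bndᶜ → ℂ,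
      BiDirSolves P Bnd f g w ↔
        ((∀ z : ↥Bndᶜ, z.1 ∈ bY P Bnd → w z = g z.1) ∧
          Mc *ᵥ (fun j : ↥(Yint P Bnd) => w ⟨j.1, Yint_subset P Bnd j.2⟩) = rhs) := by
    intro w
    have main : (∀ z : ↥Bndᶜ, z.1 ∈ bY P Bnd → w z = g z.1) →
        ((∀ y : ↥(Yint P Bnd),
            lapY P Bnd (lapY P Bnd w) ⟨y.1, (Finset.mem_sdiff.mp y.2).1⟩ = f y.1)
          ↔ Mc *ᵥ (fun j : ↥(Yint P Bnd) => w ⟨j.1, Yint_subset P Bnd j.2⟩) = rhs) := by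
      intro hb
      have hdecomp : w = (fun z : ↥Bndᶜ => if h : z.1 ∈ Yint P Bnd then
          w ⟨z.1, Yint_subset P Bnd h⟩ else 0) + κ := by
        funext z
        by_cases hz : z.1 ∈ Yint P Bnd
        · simp only [Pi.add_apply, dif_pos hz, hκdef, if_pos hz, add_zero]
        · have hzb : z.1 ∈ bY P Bnd := by
            by_contra hc
            exact hz (mem_Yint_of z.2 hc)
          simp only [Pi.add_apply, dif_neg hz, hκdef, if_neg hz, zero_add]
          exact hb z hzb
      have heval : ∀ y : ↥(Yint P Bnd),
          lapY P Bnd (lapY P Bnd w) ⟨y.1, (Finset.mem_sdiff.mp y.2).1⟩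
            = (Mc *ᵥ fun j : ↥(Yint P Bnd) => w ⟨j.1, Yint_subset P Bnd j.2⟩) y + cE y := by
        intro y
        calc lapY P Bnd (lapY P Bnd w) ⟨y.1, (Finset.mem_sdiff.mp y.2).1⟩
            = lapY P Bnd (lapY P Bnd ((fun z : ↥Bndᶜ => if h : z.1 ∈ Yint P Bnd then
                w ⟨z.1, Yint_subset P Bnd h⟩ else 0) + κ)) ⟨y.1, Yint_subset P Bnd y.2⟩ := by
              rw [← hdecomp]
          _ = lapY P Bnd (lapY P Bnd (fun z : ↥Bndᶜ => if h : z.1 ∈ Yint P Bnd then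
                w ⟨z.1, Yint_subset P Bnd h⟩ else 0)) ⟨y.1, Yint_subset P Bnd y.2⟩ + cE y := by
              rw [lin]
          _ = _ := by
              congr 1
              have hle := lap_lap_ext P Bnd hnonneg hrow
                (fun j : ↥(Yint P Bnd) => w ⟨j.1, Yint_subset P Bnd j.2⟩) y
              refine hle.trans ?_
              simp only [hMcdef, Matrix.mulVec, dotProduct, Matrix.map_apply]
      constructor
      · intro h1
        funext y
        have h2 := heval y
        rw [h1 y] at h2
        rw [hrhsdef]
        exact (eq_sub_of_add_eq h2.symm)
      · intro h2 y
        rw [heval y, congrFun h2 y, hrhsdef]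
        exact sub_add_cancel _ _
    constructor
    · rintro ⟨h1, h2⟩
      have hb : ∀ z : ↥Bndᶜ, z.1 ∈ bY P Bnd → w z = g z.1 := fun z hz => h2 z hz
      exact ⟨hb, (main hb).mp h1⟩
    · rintro ⟨hb, h2⟩
      exact ⟨(main hb).mpr h2, fun z hz => hb z hz⟩
  -- the unique solution of the bi-Laplace Dirichlet problem
  obtain ⟨x₀, hx₀, hx₀u⟩ := solve rhs
  set w₀ : ↥Bndᶜ → ℂ :=
    fun z => if h : z.1 ∈ Yint P Bnd then x₀ ⟨z.1, h⟩ else g z.1 with hw₀def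
  have hw₀b : ∀ z : ↥Bndᶜ, z.1 ∈ bY P Bnd → w₀ z = g z.1 := by
    intro z hz
    simp only [hw₀def]
    rw [dif_neg (not_mem_Yint hz)]
  have hw₀int : (fun j : ↥(Yint P Bnd) => w₀ ⟨j.1, Yint_subset P Bnd j.2⟩) = x₀ := by
    funext j
    simp only [hw₀def]
    rw [dif_pos j.2]
  have hw₀ : BiDirSolves P Bnd f g w₀ :=
    (char w₀).mpr ⟨hw₀b, by rw [hw₀int]; exact hx₀⟩
  have huniqw : ∀ w, BiDirSolves P Bnd f g w → w = w₀ := by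
    intro w hw
    obtain ⟨hb, hsys⟩ := (char w).mp hw
    have hxeq := hx₀u _ hsys
    funext z
    by_cases hz : z.1 ∈ Yint P Bnd
    · have h1 := congrFun hxeq ⟨z.1, hz⟩
      have h2 : w₀ z = x₀ ⟨z.1, hz⟩ := by
        simp only [hw₀def]
        rw [dif_pos hz]
      have h3 : (⟨z.1, Yint_subset P Bnd hz⟩ : ↥Bndᶜ) = z := Subtype.ext rfl
      rw [h3] at h1
      rw [h2, ← h1]
    · have hzb : z.1 ∈ bY P Bnd := by
        by_contra hc
        exact hz (mem_Yint_of z.2 hc)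
      rw [hb z hzb]
      exact (hw₀b z hzb).symm
  -- the boundary condition on `∂Y` rewritten
  have hbnd_iff : ∀ u : X → ℂ, (∀ x ∈ Bnd, u x = g₂ x) → ∀ y ∈ bY P Bnd,
      (((∑ z ∈ Bnd, P y z : ℝ) : ℂ)⁻¹ * ∑ z ∈ Bnd, (P y z : ℂ) * (u z - u y) = g₁ y
        ↔ u y = g y) := by
    intro u hu y hy
    have hspos := sB_pos hnonneg hy
    have hsne : ((∑ z ∈ Bnd, P y z : ℝ) : ℂ) ≠ 0 := by
      exact_mod_cast ne_of_gt hspos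
    have hexp : ∑ z ∈ Bnd, (P y z : ℂ) * (u z - u y)
        = (∑ z ∈ Bnd, (P y z : ℂ) * g₂ z) - ((∑ z ∈ Bnd, P y z : ℝ) : ℂ) * u y := by
      simp only [mul_sub]
      rw [Finset.sum_sub_distrib]
      congr 1
      · exact Finset.sum_congr rfl fun z hz => by rw [hu z hz]
      · rw [← Finset.sum_mul]
        congr 1
        norm_cast
    rw [hexp, mul_sub, inv_mul_cancel_left₀ hsne]
    constructor
    · intro h
      simp only [hgdef]
      linear_combination -h
    · intro h
      rw [h]
      simp only [hgdef]
      ring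
  -- the plate problem in terms of the bi-Laplace Dirichlet problem
  have plate_iff : ∀ u : X → ℂ, PlateSolves P Bnd f g₁ g₂ u ↔
      ((∀ x ∈ Bnd, u x = g₂ x) ∧ BiDirSolves P Bnd f g (fun z : ↥Bndᶜ => u z.1)) := by
    intro u
    constructor
    · rintro ⟨h1, h2, h3⟩
      refine ⟨h3, h1, fun z hz => ?_⟩
      exact (hbnd_iff u h3 z.1 hz).mp (h2 z.1 hz)
    · rintro ⟨h3, h1, hb⟩
      refine ⟨h1, fun y hy => ?_, h3⟩
      exact (hbnd_iff u h3 y hy).mpr (hb ⟨y, bY_subset P Bnd hy⟩ hy)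
  -- the solution of the plate problem
  set u₀ : X → ℂ := fun v => if h : v ∈ Bndᶜ then w₀ ⟨v, h⟩ else g₂ v with hu₀def
  have hu₀Bnd : ∀ x ∈ Bnd, u₀ x = g₂ x := by
    intro x hx
    simp only [hu₀def]
    rw [dif_neg (fun hc => (Finset.mem_compl.mp hc) hx)]
  have hu₀Y : (fun z : ↥Bndᶜ => u₀ z.1) = w₀ := by
    funext z
    simp only [hu₀def]
    rw [dif_pos z.2]
  have hu₀ : PlateSolves P Bnd f g₁ g₂ u₀ :=
    (plate_iff u₀).mpr ⟨hu₀Bnd, by rw [hu₀Y]; exact hw₀⟩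
  constructor
  · refine ⟨u₀, hu₀, ?_⟩
    intro u hu
    obtain ⟨h3, hbd⟩ := (plate_iff u).mp hu
    have hY := huniqw _ hbd
    funext v
    by_cases hv : v ∈ Bndᶜ
    · have h1 := congrFun hY ⟨v, hv⟩
      simp only [hu₀def]
      rw [dif_pos hv, ← h1]
    · have hvB : v ∈ Bnd := by
        rwa [Finset.mem_compl, not_not] at hv
      rw [h3 v hvB]
      exact (hu₀Bnd v hvB).symm
  · intro u hu
    obtain ⟨h3, hbd⟩ := (plate_iff u).mp hu
    constructor
    · intro y hy
      have h1 : u y = g y := hbd.2 ⟨y, bY_subset P Bnd hy⟩ hy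
      rw [h1, hgdef]
    · intro w hw
      have hw' : BiDirSolves P Bnd f g w := hw
      rw [huniqw w hw']
      exact (huniqw _ hbd).symm
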